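/- Let u := x_{−i_1}(z_1)⋯x_{−i_N}(z_N), where (i_1,…,i_N) = i_0 and z_1,…,z_N ∈ K^×; note u is lower triangular and invertible. Let L be lower unitriangular and V upper unitriangular with (w̄_0·u^T)^{−1} = L·V, and set u_1 := (w̄_0·V^{−1}·w̄_0^{−1})^T. Let d = diag(d_1,…,d_n) with d_1,…,d_n ∈ K^×, and let u_2 be an upper unitriangular matrix such that b := u_1·d·w̄_0·u_2 is lower triangular. Then b_{n+1−j, n+1−j} = d_j·u_{jj} for every j = 1,…,n; that is, the diagonal part of b equals w̄_0·d·[u]_0·w̄_0^{−1}, where [u]_0 denotes the diagonal part of u. -/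

import Mathlib

open Matrix

noncomputable section

variable {K : Type*} [Field K]

/-- `x_i(z)`: identity except entry `z` in (1-based) position `(i, i+1)`. -/
def xMat (n i : ℕ) (z : K) : Matrix (Fin n) (Fin n) K :=
  Matrix.of fun a b => if (a : ℕ) = (b : ℕ) then 1
    else if (a : ℕ) + 1 = i ∧ (b : ℕ) = i then z else 0

/-- `y_i(z)`: identity except entry `z` in (1-based) position `(i+1, i)`. -/
def yMat (n i : ℕ) (z : K) : Matrix (Fin n) (Fin n) K :=
  Matrix.of fun a b => if (a : ℕ) = (b : ℕ) then 1
    else if (a : ℕ) = i ∧ (b : ℕ) + 1 = i then z else 0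

/-- `x_{-i}(z)`: identity except the 2×2 submatrix in (1-based) rows/columns `i, i+1`
is `((z⁻¹, 0), (1, z))`. -/
def xnegMat (n i : ℕ) (z : K) : Matrix (Fin n) (Fin n) K :=
  Matrix.of fun a b =>
    if (a : ℕ) + 1 = i ∧ (b : ℕ) + 1 = i then z⁻¹
    else if (a : ℕ) = i ∧ (b : ℕ) = i then z
    else if (a : ℕ) = i ∧ (b : ℕ) + 1 = i then 1
    else if (a : ℕ) = (b : ℕ) then 1
    else 0

/-- `s̄_i := x_i(-1) · y_i(1) · x_i(-1)`. -/
def sbar (n i : ℕ) : Matrix (Fin n) (Fin n) K :=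
  xMat n i (-1) * yMat n i 1 * xMat n i (-1)

/-- The reduced expression `i₀ = (1,2,…,n-1, 1,2,…,n-2, …, 1,2, 1)` for `w₀`. -/
def i0List (n : ℕ) : List ℕ :=
  ((List.range (n - 1)).map fun j => List.range' 1 (n - 1 - j)).foldr (· ++ ·) []

/-- The reduced expression `i₀' = (n-1,…,1, n-1,…,2, …, n-1,n-2, n-1)` for `w₀`. -/
def i0'List (n : ℕ) : List ℕ :=
  ((List.range (n - 1)).map fun j => (List.range' (1 + j) (n - 1 - j)).reverse).foldr (· ++ ·) []

/-- The matrix `w̄₀ = s̄_{i_1} ⋯ s̄_{i_N}` (computed along `i₀`; it is independent of the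
choice of reduced expression). -/
def w0Mat (n : ℕ) : Matrix (Fin n) (Fin n) K :=
  ((i0List n).map fun i => sbar n i).prod

/-- `x_{-i_1}(z_1) ⋯ x_{-i_N}(z_N)` along the word `l` (with 1-based coordinates `z`). -/
def xnegProd (n : ℕ) (l : List ℕ) (z : ℕ → K) : Matrix (Fin n) (Fin n) K :=
  ((List.range l.length).map fun r => xnegMat n (l.getD r 0) (z (r + 1))).prod

/-- `x_{i_1}(p_1) ⋯ x_{i_N}(p_N)` along the word `l`. -/
def xProd (n : ℕ) (l : List ℕ) (p : ℕ → K) : Matrix (Fin n) (Fin n) K :=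
  ((List.range l.length).map fun r => xMat n (l.getD r 0) (p (r + 1))).prod

/-- `y_{i_1}(q_1) ⋯ y_{i_N}(q_N)` along the word `l`. -/
def yProd (n : ℕ) (l : List ℕ) (q : ℕ → K) : Matrix (Fin n) (Fin n) K :=
  ((List.range l.length).map fun r => yMat n (l.getD r 0) (q (r + 1))).prod

/-- The adjacent transposition `σ_i` (swapping `i` and `i+1`), as a function on `ℕ`. -/
def sigmaFun (i : ℕ) : ℕ → ℕ := fun k => if k = i then i + 1 else if k = i + 1 then i else k

/-- `σ_{i_1} ∘ σ_{i_2} ∘ ⋯ ∘ σ_{i_N}` (rightmost factor applied first). -/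
def wordPerm (l : List ℕ) : ℕ → ℕ := l.foldr (fun i f => sigmaFun i ∘ f) id

/-- A reduced expression for the longest element `w₀` of `Sₙ`. -/
def IsReducedWord (n : ℕ) (l : List ℕ) : Prop :=
  l.length = n * (n - 1) / 2 ∧ (∀ i ∈ l, 1 ≤ i ∧ i ≤ n - 1) ∧
    ∀ k, 1 ≤ k → k ≤ n → wordPerm l k = n + 1 - k

/-- Lower unitriangular. -/
def IsLowerUni {n : ℕ} (M : Matrix (Fin n) (Fin n) K) : Prop :=
  (∀ i, M i i = 1) ∧ ∀ i j : Fin n, i < j → M i j = 0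

/-- Upper unitriangular. -/
def IsUpperUni {n : ℕ} (M : Matrix (Fin n) (Fin n) K) : Prop :=
  (∀ i, M i i = 1) ∧ ∀ i j : Fin n, j < i → M i j = 0

/-- `s_k := Σ_{j=1}^{k-1} (n - j)`. -/
def sIdx (n k : ℕ) : ℕ := ∑ j ∈ Finset.range (k - 1), (n - (j + 1))


namespace Stmt1Aux

lemma neg_one_pow_mul_self (k : ℕ) : ((-1 : K) ^ k) * ((-1 : K) ^ k) = 1 := by
  rw [← mul_pow]; norm_num

/-- Product `s̄_1 ⋯ s̄_m` (an `n × n` matrix). -/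
def Amat (n m : ℕ) : Matrix (Fin n) (Fin n) K :=
  Matrix.of fun a b =>
    if (b : ℕ) < m ∧ (a : ℕ) = (b : ℕ) + 1 then 1
    else if (b : ℕ) = m ∧ (a : ℕ) = 0 then (-1) ^ m
    else if m < (b : ℕ) ∧ (a : ℕ) = (b : ℕ) then 1
    else 0

/-- Product `A_t ⋯ A_1` (signed reversal on the first `t+1` coordinates). -/
def Cmat (n t : ℕ) : Matrix (Fin n) (Fin n) K :=
  Matrix.of fun a b =>
    if (b : ℕ) ≤ t ∧ (a : ℕ) + (b : ℕ) = t then (-1) ^ (b : ℕ)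
    else if t < (b : ℕ) ∧ (a : ℕ) = (b : ℕ) then 1
    else 0

lemma xMat_eq {n : ℕ} (p : ℕ) (hp : p + 1 < n) (zz : K) :
    xMat n (p + 1) zz = 1 + Matrix.single ⟨p, by omega⟩ ⟨p + 1, hp⟩ zz := by
  ext a b
  simp only [xMat, Matrix.of_apply, Matrix.add_apply, Matrix.one_apply,
    Matrix.single, Fin.ext_iff]
  split_ifs <;> first | rfl | omega | (exfalso; omega) | (exfalso; simp_all; omega) | simp_all | (simp_all; exfalso; omega) | (simp_all; ring)

lemma yMat_eq {n : ℕ} (p : ℕ) (hp : p + 1 < n) (zz : K) :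
    yMat n (p + 1) zz = 1 + Matrix.single ⟨p + 1, hp⟩ ⟨p, by omega⟩ zz := by
  ext a b
  simp only [yMat, Matrix.of_apply, Matrix.add_apply, Matrix.one_apply,
    Matrix.single, Fin.ext_iff]
  split_ifs <;> first | rfl | omega | (exfalso; omega) | (exfalso; simp_all; omega) | simp_all | (simp_all; exfalso; omega) | (simp_all; ring)

lemma sbar_eq {n : ℕ} (p : ℕ) (hp : p + 1 < n) :
    sbar n (p + 1) (K := K)
      = 1 + Matrix.single ⟨p + 1, hp⟩ ⟨p, by omega⟩ (1 : K)
          + Matrix.single ⟨p, by omega⟩ ⟨p + 1, hp⟩ (-1 : K)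
          + Matrix.single ⟨p, by omega⟩ ⟨p, by omega⟩ (-1 : K)
          + Matrix.single ⟨p + 1, hp⟩ ⟨p + 1, hp⟩ (-1 : K) := by
  have hp' : p < n := by omega
  set fp : Fin n := ⟨p, hp'⟩ with hfp
  set fq : Fin n := ⟨p + 1, hp⟩ with hfq
  have hne : fq ≠ fp := by simp [hfq, hfp, Fin.ext_iff]
  set A := Matrix.single fp fq (-1 : K) with hA
  set B := Matrix.single fq fp (1 : K) with hB
  have hAA : A * A = 0 := Matrix.single_mul_single_of_ne _ _ _ _ hne _
  have hAB : A * B = Matrix.single fp fp (-1 : K) := by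
    rw [hA, hB, Matrix.single_mul_single_same]; norm_num
  have hBA : B * A = Matrix.single fq fq (-1 : K) := by
    rw [hA, hB, Matrix.single_mul_single_same]; norm_num
  have hABA : A * B * A = Matrix.single fp fq (1 : K) := by
    rw [hAB, hA, Matrix.single_mul_single_same]; norm_num
  have hx : xMat n (p + 1) (-1 : K) = 1 + A := xMat_eq p hp _
  have hy : yMat n (p + 1) (1 : K) = 1 + B := yMat_eq p hp _
  have key : (1 + A) * (1 + B) * (1 + A)
      = 1 + B + (A + A + A * B * A) + A * B + B * A + A * A := by noncomm_ring
  have hAAA : A + A + A * B * A = A := by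
    rw [hABA, hA, ← Matrix.single_add, ← Matrix.single_add]
    norm_num
  rw [sbar, hx, hy, key, hAAA, hAB, hBA, hAA, add_zero]

lemma mul_sbar_apply {n : ℕ} (p : ℕ) (hp : p + 1 < n) (M : Matrix (Fin n) (Fin n) K)
    (a b : Fin n) :
    (M * sbar n (p + 1) (K := K)) a b =
      if (b : ℕ) = p then M a ⟨p + 1, hp⟩
      else if (b : ℕ) = p + 1 then -(M a ⟨p, by omega⟩)
      else M a b := by
  have hp' : p < n := by omega
  set fp : Fin n := ⟨p, hp'⟩ with hfp
  set fq : Fin n := ⟨p + 1, hp⟩ with hfq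
  have key : ∀ (i j : Fin n) (cc : K) (x y : Fin n),
      (M * Matrix.single i j cc) x y = if y = j then M x i * cc else 0 := by
    intro i j cc x y
    by_cases h : y = j
    · subst h; rw [if_pos rfl, Matrix.mul_single_apply_same]
    · rw [if_neg h, Matrix.mul_single_apply_of_ne _ _ _ _ _ h]
  rw [sbar_eq p hp]
  simp only [Matrix.mul_add, Matrix.mul_one, Matrix.add_apply, key]
  rw [← hfp, ← hfq]
  have hpq : fp ≠ fq := by simp [hfp, hfq, Fin.ext_iff]
  have hqp : fq ≠ fp := by simp [hfp, hfq, Fin.ext_iff]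
  by_cases h1 : b = fp
  · subst h1
    have e1 : ((fp : ℕ) = p) := rfl
    simp only [if_pos rfl, if_neg hpq, e1, if_pos]
    ring
  · by_cases h2 : b = fq
    · subst h2
      have e1 : ((fq : ℕ) = p + 1) := rfl
      have e2 : ¬((fq : ℕ) = p) := by simp [hfq]
      simp only [if_pos rfl, if_neg hqp, e1, e2, if_neg, if_pos, not_false_iff]
      rw [if_neg (by simp [hfq])]
      ring
    · have hb1 : ¬((b : ℕ) = p) := fun h => h1 (Fin.ext h)
      have hb2 : ¬((b : ℕ) = p + 1) := fun h => h2 (Fin.ext h)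
      simp only [if_neg h1, if_neg h2, if_neg hb1, if_neg hb2]
      ring

lemma Amat_zero {n : ℕ} : Amat n 0 (K := K) = 1 := by
  ext a b
  simp only [Amat, Matrix.of_apply, Matrix.one_apply, Fin.ext_iff]
  split_ifs <;> first | rfl | omega | (exfalso; omega) | (exfalso; simp_all; omega) | simp_all | (simp_all; exfalso; omega) | (simp_all; ring)

lemma Cmat_zero {n : ℕ} : Cmat n 0 (K := K) = 1 := by
  ext a b
  simp only [Cmat, Matrix.of_apply, Matrix.one_apply, Fin.ext_iff]
  split_ifs <;> first | rfl | omega | (exfalso; omega) | (exfalso; simp_all; omega) | simp_all | (simp_all; exfalso; omega) | (simp_all; ring)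

lemma block_prod {n : ℕ} : ∀ m, m < n →
    ((List.range' 1 m).map (fun i => sbar n i (K := K))).prod = Amat n m := by
  intro m
  induction m with
  | zero => intro _; simpa using (Amat_zero (K := K) (n := n)).symm
  | succ m ih =>
    intro hm
    have h1m : 1 + 1 * m = m + 1 := by omega
    rw [List.range'_concat, List.map_append, List.prod_append, ih (by omega), h1m]
    simp only [List.map_cons, List.map_nil, List.prod_cons, List.prod_nil, mul_one]
    ext a b
    rw [mul_sbar_apply m hm]
    simp only [Amat, Matrix.of_apply, Fin.val_mk]
    have ha := a.isLt
    have hb := b.isLt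
    split_ifs <;> first | rfl | omega | (exfalso; omega) | (exfalso; simp_all; omega) | (simp_all [pow_succ, Fin.val_mk]) | (simp_all [pow_succ, Fin.val_mk]; exfalso; omega) | (simp_all [pow_succ, Fin.val_mk]; ring)

lemma Amat_mul_apply {n m : ℕ} (hm : m < n) (M : Matrix (Fin n) (Fin n) K) (a b : Fin n) :
    (Amat n m (K := K) * M) a b =
      if h0 : (a : ℕ) = 0 then (-1) ^ m * M ⟨m, hm⟩ b
      else if (a : ℕ) ≤ m then M ⟨(a : ℕ) - 1, by omega⟩ b
      else M a b := by
  rw [Matrix.mul_apply]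
  by_cases h0 : (a : ℕ) = 0
  · rw [dif_pos h0, Finset.sum_eq_single (⟨m, hm⟩ : Fin n)]
    · congr 1
      simp only [Amat, Matrix.of_apply, Fin.val_mk]
      split_ifs <;> first | rfl | omega | (exfalso; omega) | (exfalso; simp_all; omega) | simp_all | (simp_all; exfalso; omega) | (simp_all; ring)
    · intro c _ hc
      have hcv : (c : ℕ) ≠ m := fun h => hc (Fin.ext h)
      have hz : Amat n m (K := K) a c = 0 := by
        simp only [Amat, Matrix.of_apply, Fin.val_mk]
        split_ifs <;> first | rfl | omega | (exfalso; omega) | (exfalso; simp_all; omega) | (exfalso; simp_all)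
      rw [hz, zero_mul]
    · intro h; exact absurd (Finset.mem_univ _) h
  · rw [dif_neg h0]
    by_cases h1 : (a : ℕ) ≤ m
    · rw [if_pos h1, Finset.sum_eq_single (⟨(a : ℕ) - 1, by omega⟩ : Fin n)]
      · have hone : Amat n m (K := K) a ⟨(a : ℕ) - 1, by omega⟩ = 1 := by
          simp only [Amat, Matrix.of_apply, Fin.val_mk]
          split_ifs <;> first | rfl | omega | (exfalso; omega) | (exfalso; simp_all; omega) | (exfalso; simp_all)
        rw [hone, one_mul]
      · intro c _ hc
        have hcv : (c : ℕ) ≠ (a : ℕ) - 1 := fun h => hc (Fin.ext h)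
        have hz : Amat n m (K := K) a c = 0 := by
          simp only [Amat, Matrix.of_apply, Fin.val_mk]
          split_ifs <;> first | rfl | omega | (exfalso; omega) | (exfalso; simp_all; omega) | (exfalso; simp_all)
        rw [hz, zero_mul]
      · intro h; exact absurd (Finset.mem_univ _) h
    · rw [if_neg h1, Finset.sum_eq_single a]
      · have hone : Amat n m (K := K) a a = 1 := by
          simp only [Amat, Matrix.of_apply, Fin.val_mk]
          split_ifs <;> first | rfl | omega | (exfalso; omega) | (exfalso; simp_all; omega) | (exfalso; simp_all)
        rw [hone, one_mul]
      · intro c _ hc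
        have hcv : (c : ℕ) ≠ (a : ℕ) := fun h => hc (Fin.ext h)
        have hz : Amat n m (K := K) a c = 0 := by
          simp only [Amat, Matrix.of_apply, Fin.val_mk]
          split_ifs <;> first | rfl | omega | (exfalso; omega) | (exfalso; simp_all; omega) | (exfalso; simp_all)
        rw [hz, zero_mul]
      · intro h; exact absurd (Finset.mem_univ _) h

lemma AC_step {n t : ℕ} (ht : t + 1 < n) :
    Amat n (t + 1) (K := K) * Cmat n t = Cmat n (t + 1) := by
  ext a b
  rw [Amat_mul_apply ht]
  simp only [Cmat, Matrix.of_apply, Fin.val_mk]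
  have ha := a.isLt
  have hb := b.isLt
  split_ifs <;> first | rfl | omega | (exfalso; omega) | (exfalso; simp_all; omega) | (simp_all [pow_succ, Fin.val_mk]) | (simp_all [pow_succ, Fin.val_mk]; exfalso; omega) | (simp_all [pow_succ, Fin.val_mk]; ring)

def word : ℕ → List ℕ
  | 0 => []
  | (t + 1) => List.range' 1 (t + 1) ++ word t

lemma word_prod {n : ℕ} : ∀ t, t < n →
    ((word t).map (fun i => sbar n i (K := K))).prod = Cmat n t
  | 0, _ => by simpa [word] using (Cmat_zero (K := K) (n := n)).symm
  | (t + 1), ht => by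
    rw [word, List.map_append, List.prod_append, block_prod (t + 1) ht,
      word_prod t (by omega), AC_step ht]

lemma i0_aux : ∀ t, (((List.range t).map fun j => List.range' 1 (t - j)).foldr (· ++ ·) []) = word t
  | 0 => rfl
  | (t + 1) => by
    rw [List.range_succ_eq_map]
    simp only [List.map_cons, List.map_map, List.foldr_cons, Nat.sub_zero]
    rw [word]
    congr 1
    rw [← i0_aux t]
    congr 1
    apply List.map_congr_left
    intro j _
    simp only [Function.comp_apply]
    congr 1
    omega

lemma w0_eq {n : ℕ} (hn : 0 < n) : w0Mat n (K := K) = Cmat n (n - 1) := by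
  rw [w0Mat, show i0List n = word (n - 1) from i0_aux (n - 1), word_prod (n - 1) (by omega)]

lemma W_apply {n : ℕ} (a b : Fin n) :
    Cmat n (n - 1) (K := K) a b = if (a : ℕ) + (b : ℕ) = n - 1 then (-1) ^ (b : ℕ) else 0 := by
  have ha := a.isLt
  have hb := b.isLt
  simp only [Cmat, Matrix.of_apply, Fin.val_mk]
  split_ifs <;> first | rfl | omega

lemma W_mul_apply {n : ℕ} (M : Matrix (Fin n) (Fin n) K) (a b : Fin n) :
    (Cmat n (n - 1) (K := K) * M) a b = (-1) ^ ((a.rev : ℕ)) * M a.rev b := by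
  have ha := a.isLt
  rw [Matrix.mul_apply, Finset.sum_eq_single a.rev]
  · rw [W_apply]
    rw [if_pos (by simp [Fin.val_rev]; omega)]
  · intro c _ hc
    have hcv : (c : ℕ) ≠ n - ((a : ℕ) + 1) := fun h => hc (by
      apply Fin.ext; rw [Fin.val_rev]; exact h)
    rw [W_apply, if_neg (by omega), zero_mul]
  · intro h; exact absurd (Finset.mem_univ _) h

lemma mul_W_apply {n : ℕ} (M : Matrix (Fin n) (Fin n) K) (a b : Fin n) :
    (M * Cmat n (n - 1) (K := K)) a b = (-1) ^ ((b : ℕ)) * M a b.rev := by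
  have hb := b.isLt
  rw [Matrix.mul_apply, Finset.sum_eq_single b.rev]
  · rw [W_apply]
    rw [if_pos (by simp [Fin.val_rev]; omega)]
    ring
  · intro c _ hc
    have hcv : (c : ℕ) ≠ n - ((b : ℕ) + 1) := fun h => hc (by
      apply Fin.ext; rw [Fin.val_rev]; exact h)
    rw [W_apply, if_neg (by omega), mul_zero]
  · intro h; exact absurd (Finset.mem_univ _) h

lemma mul_Wt_apply {n : ℕ} (M : Matrix (Fin n) (Fin n) K) (a b : Fin n) :
    (M * (Cmat n (n - 1) (K := K))ᵀ) a b = (-1) ^ ((b.rev : ℕ)) * M a b.rev := by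
  have hb := b.isLt
  rw [Matrix.mul_apply, Finset.sum_eq_single b.rev]
  · rw [Matrix.transpose_apply, W_apply]
    rw [if_pos (by simp [Fin.val_rev]; omega)]
    ring
  · intro c _ hc
    have hcv : (c : ℕ) ≠ n - ((b : ℕ) + 1) := fun h => hc (by
      apply Fin.ext; rw [Fin.val_rev]; exact h)
    rw [Matrix.transpose_apply, W_apply, if_neg (by omega), mul_zero]
  · intro h; exact absurd (Finset.mem_univ _) h

lemma WtW {n : ℕ} : (Cmat n (n - 1) (K := K))ᵀ * Cmat n (n - 1) = 1 := by
  ext a b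
  rw [mul_W_apply, Matrix.transpose_apply, W_apply, Matrix.one_apply]
  have ha := a.isLt
  have hb := b.isLt
  have hr : ((b.rev : ℕ)) = n - ((b : ℕ) + 1) := Fin.val_rev b
  by_cases hab : a = b
  · subst hab
    have hcond : ((a.rev : ℕ)) + (a : ℕ) = n - 1 := by
      rw [Fin.val_rev]; omega
    rw [if_pos hcond, if_pos rfl]
    exact neg_one_pow_mul_self _
  · have hcond : ¬(((b.rev : ℕ)) + (a : ℕ) = n - 1) := fun h => hab (Fin.ext (by omega)).symm
    rw [if_neg hcond, if_neg hab, mul_zero]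

lemma WWt {n : ℕ} : Cmat n (n - 1) (K := K) * (Cmat n (n - 1))ᵀ = 1 := by
  ext a b
  rw [mul_Wt_apply, W_apply, Matrix.one_apply]
  have ha := a.isLt
  have hb := b.isLt
  have hr : ((b.rev : ℕ)) = n - ((b : ℕ) + 1) := Fin.val_rev b
  by_cases hab : a = b
  · subst hab
    have hcond : (a : ℕ) + ((a.rev : ℕ)) = n - 1 := by
      rw [Fin.val_rev]; omega
    rw [if_pos hcond, if_pos rfl]
    exact neg_one_pow_mul_self _
  · have hcond : ¬((a : ℕ) + ((b.rev : ℕ)) = n - 1) := fun h => hab (Fin.ext (by omega))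
    rw [if_neg hcond, if_neg hab, mul_zero]

lemma WW {n : ℕ} : Cmat n (n - 1) (K := K) * Cmat n (n - 1) = ((-1 : K) ^ (n - 1)) • 1 := by
  ext a b
  rw [mul_W_apply, W_apply, Matrix.smul_apply, Matrix.one_apply]
  have ha := a.isLt
  have hb := b.isLt
  have hr : ((b.rev : ℕ)) = n - ((b : ℕ) + 1) := Fin.val_rev b
  by_cases hab : a = b
  · subst hab
    have hcond : (a : ℕ) + ((a.rev : ℕ)) = n - 1 := by
      rw [Fin.val_rev]; omega
    rw [if_pos hcond, if_pos rfl, ← pow_add, smul_eq_mul, mul_one, hcond]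
  · have hcond : ¬((a : ℕ) + ((b.rev : ℕ)) = n - 1) := fun h => hab (Fin.ext (by omega))
    rw [if_neg hcond, if_neg hab, mul_zero, smul_eq_mul, mul_zero]

/-- lower triangular (zero above the diagonal) -/
def IsLT {n : ℕ} (M : Matrix (Fin n) (Fin n) K) : Prop :=
  ∀ a b : Fin n, a < b → M a b = 0

lemma isLT_xneg {n i : ℕ} (zz : K) : IsLT (xnegMat n i zz) := by
  intro a b hab
  have hab' : (a : ℕ) < (b : ℕ) := hab
  simp only [xnegMat, Matrix.of_apply]
  split_ifs <;> first | rfl | omega | (exfalso; omega) | (exfalso; simp_all; omega) | (exfalso; simp_all)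

lemma isLT_prod {n : ℕ} : ∀ (l : List (Matrix (Fin n) (Fin n) K)), (∀ M ∈ l, IsLT M) → IsLT l.prod
  | [], _ => by
    intro a b hab
    simp only [List.prod_nil, Matrix.one_apply]
    rw [if_neg (fun h => absurd h (ne_of_lt hab))]
  | (M :: l), h => by
    intro a b hab
    rw [List.prod_cons, Matrix.mul_apply]
    apply Finset.sum_eq_zero
    intro c _
    rcases lt_or_ge c b with hcb | hbc
    · rcases lt_or_ge a c with hac | hca
      · rw [h M (List.mem_cons_self) a c hac, zero_mul]
      · rw [isLT_prod l (fun N hN => h N (List.mem_cons_of_mem M hN)) c b (lt_of_le_of_lt hca hab), mul_zero]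
    · rw [h M (List.mem_cons_self) a c (lt_of_lt_of_le hab hbc), zero_mul]

lemma mul_diag_lower {n : ℕ} (P Q : Matrix (Fin n) (Fin n) K)
    (hP : ∀ x y : Fin n, x < y → P x y = 0) (hQ : ∀ x y : Fin n, x < y → Q x y = 0)
    (a : Fin n) : (P * Q) a a = P a a * Q a a := by
  rw [Matrix.mul_apply, Finset.sum_eq_single a]
  · intro c _ hc
    rcases lt_or_gt_of_ne hc with h | h
    · rw [hQ c a h, mul_zero]
    · rw [hP a c h, zero_mul]
  · intro h; exact absurd (Finset.mem_univ _) h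

lemma mul_diag_upper {n : ℕ} (P Q : Matrix (Fin n) (Fin n) K)
    (hP : ∀ x y : Fin n, y < x → P x y = 0) (hQ : ∀ x y : Fin n, y < x → Q x y = 0)
    (a : Fin n) : (P * Q) a a = P a a * Q a a := by
  rw [Matrix.mul_apply, Finset.sum_eq_single a]
  · intro c _ hc
    rcases lt_or_gt_of_ne hc with h | h
    · rw [hP a c h, zero_mul]
    · rw [hQ c a h, mul_zero]
  · intro h; exact absurd (Finset.mem_univ _) h

end Stmt1Aux

open Stmt1Aux in
lemma det_isLowerUni {n : ℕ} {M : Matrix (Fin n) (Fin n) K} (hM : IsLowerUni M) :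
    M.det = 1 := by
  rw [Matrix.det_of_lowerTriangular M (fun i j h => hM.2 i j h)]
  exact Finset.prod_eq_one fun i _ => hM.1 i

open Stmt1Aux in
lemma det_isUpperUni {n : ℕ} {M : Matrix (Fin n) (Fin n) K} (hM : IsUpperUni M) :
    M.det = 1 := by
  rw [Matrix.det_of_upperTriangular (fun i j h => hM.2 i j h)]
  exact Finset.prod_eq_one fun i _ => hM.1 i

open Stmt1Aux in
theorem stmt1 (n : ℕ) (hn : 2 ≤ n) (z : ℕ → K)
    (hz : ∀ k, 1 ≤ k → k ≤ n * (n - 1) / 2 → z k ≠ 0)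
    (u : Matrix (Fin n) (Fin n) K) (hu : u = xnegProd n (i0List n) z)
    (L V : Matrix (Fin n) (Fin n) K) (hL : IsLowerUni L) (hV : IsUpperUni V)
    (hLV : (w0Mat n * uᵀ)⁻¹ = L * V)
    (u1 : Matrix (Fin n) (Fin n) K)
    (hu1 : u1 = (w0Mat n * V⁻¹ * (w0Mat (K := K) n)⁻¹)ᵀ)
    (d : Fin n → K) (hd : ∀ j, d j ≠ 0)
    (u2 : Matrix (Fin n) (Fin n) K) (hu2 : IsUpperUni u2)
    (b : Matrix (Fin n) (Fin n) K) (hb : b = u1 * Matrix.diagonal d * w0Mat n * u2)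
    (hbl : ∀ i j : Fin n, i < j → b i j = 0) :
    ∀ j : Fin n, b j.rev j.rev = d j * u j j := by
  have hn0 : 0 < n := by omega
  have hnonempty : Nonempty (Fin n) := ⟨⟨0, hn0⟩⟩
  have hw0 : w0Mat n (K := K) = Cmat n (n - 1) := w0_eq hn0
  -- u is lower triangular
  have hulow : ∀ x y : Fin n, x < y → u x y = 0 := by
    rw [hu]
    intro x y hxy
    refine isLT_prod _ ?_ x y hxy
    intro M hM
    rw [List.mem_map] at hM
    obtain ⟨r, _, rfl⟩ := hM
    exact isLT_xneg _
  -- determinants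
  have hdetL : L.det = 1 := det_isLowerUni hL
  have hdetV : V.det = 1 := det_isUpperUni hV
  have hdetLV : IsUnit (L * V).det := by
    rw [Matrix.det_mul, hdetL, hdetV, mul_one]; exact isUnit_one
  have hWu : IsUnit (w0Mat n (K := K) * uᵀ).det := by
    by_contra h
    have h0 : (w0Mat n (K := K) * uᵀ)⁻¹ = 0 := Matrix.nonsing_inv_apply_not_isUnit _ h
    rw [hLV] at h0
    rw [h0, Matrix.det_zero] at hdetLV
    simpa using hdetLV
  have h2 : w0Mat n (K := K) * uᵀ = V⁻¹ * L⁻¹ := by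
    rw [← Matrix.nonsing_inv_nonsing_inv (w0Mat n (K := K) * uᵀ) hWu, hLV, Matrix.mul_inv_rev]
  have hVinv : V⁻¹ = Cmat n (n - 1) * uᵀ * L := by
    rw [← hw0, h2, Matrix.mul_assoc,
      Matrix.nonsing_inv_mul L (by rw [hdetL]; exact isUnit_one), Matrix.mul_one]
  have hWinv : (Cmat n (n - 1) (K := K))⁻¹ = (Cmat n (n - 1) (K := K))ᵀ :=
    Matrix.inv_eq_right_inv WWt
  set c : K := (-1 : K) ^ (n - 1) with hc
  have hcc : c * c = 1 := neg_one_pow_mul_self _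
  have hu1' : u1 = c • (Cmat n (n - 1) * Lᵀ * u) := by
    rw [hu1, hw0, hWinv, hVinv]
    have e1 : Cmat n (n - 1) (K := K) * (Cmat n (n - 1) * uᵀ * L) * (Cmat n (n - 1))ᵀ
        = (Cmat n (n - 1) * Cmat n (n - 1)) * (uᵀ * (L * (Cmat n (n - 1))ᵀ)) := by
      simp only [Matrix.mul_assoc]
    rw [e1, WW, Matrix.smul_mul, Matrix.one_mul, Matrix.transpose_smul]
    congr 1
    rw [Matrix.transpose_mul, Matrix.transpose_mul, Matrix.transpose_transpose,
      Matrix.transpose_transpose, Matrix.mul_assoc]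
  set L₁ : Matrix (Fin n) (Fin n) K := Cmat n (n - 1) * Lᵀ * (Cmat n (n - 1))ᵀ with hL1def
  set T : Matrix (Fin n) (Fin n) K
    := c • (Cmat n (n - 1) * (u * Matrix.diagonal d * Cmat n (n - 1))) with hTdef
  have hb2 : b = L₁ * (T * u2) := by
    have e2 : L₁ * (T * u2) = c • (Cmat n (n - 1) * (Lᵀ *
        (((Cmat n (n - 1))ᵀ * Cmat n (n - 1)) * (u * (Matrix.diagonal d *
          (Cmat n (n - 1) * u2)))))) := by
      rw [hTdef, hL1def]
      simp only [Matrix.smul_mul, Matrix.mul_smul, Matrix.mul_assoc]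
    rw [e2, WtW, Matrix.one_mul, hb, hw0, hu1']
    simp only [Matrix.smul_mul, Matrix.mul_smul, Matrix.mul_assoc]
  -- entries of L₁
  have hL1_apply : ∀ x y : Fin n,
      L₁ x y = (-1 : K) ^ ((y.rev : ℕ)) * ((-1 : K) ^ ((x.rev : ℕ)) * L y.rev x.rev) := by
    intro x y
    rw [hL1def, mul_Wt_apply, W_mul_apply, Matrix.transpose_apply]
  have hL1_lower : ∀ x y : Fin n, x < y → L₁ x y = 0 := by
    intro x y hxy
    rw [hL1_apply, hL.2 _ _ (Fin.rev_lt_rev.mpr hxy), mul_zero, mul_zero]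
  have hL1_diag : ∀ x : Fin n, L₁ x x = 1 := by
    intro x
    rw [hL1_apply, hL.1, mul_one, neg_one_pow_mul_self]
  have hdetL1 : IsUnit L₁.det := by
    rw [det_isLowerUni ⟨hL1_diag, hL1_lower⟩]; exact isUnit_one
  -- entries of T
  have hT_apply : ∀ x y : Fin n,
      T x y = c * ((-1 : K) ^ ((x.rev : ℕ)) * ((-1 : K) ^ ((y : ℕ)) *
        (u x.rev y.rev * d y.rev))) := by
    intro x y
    rw [hTdef, Matrix.smul_apply, smul_eq_mul, W_mul_apply, mul_W_apply, Matrix.mul_diagonal]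
  have hT_upper : ∀ x y : Fin n, y < x → T x y = 0 := by
    intro x y hyx
    rw [hT_apply, hulow _ _ (Fin.rev_lt_rev.mpr hyx), zero_mul, mul_zero, mul_zero, mul_zero]
  have hT_diag : ∀ x : Fin n, T x x = u x.rev x.rev * d x.rev := by
    intro x
    rw [hT_apply]
    have hsum : ((x.rev : ℕ)) + (x : ℕ) = n - 1 := by
      have := x.isLt
      rw [Fin.val_rev]; omega
    have e3 : c * ((-1 : K) ^ ((x.rev : ℕ)) * ((-1 : K) ^ ((x : ℕ)) *
        (u x.rev x.rev * d x.rev)))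
        = (c * ((-1 : K) ^ (((x.rev : ℕ)) + (x : ℕ)))) * (u x.rev x.rev * d x.rev) := by
      rw [pow_add]; ring
    rw [e3, hsum, ← hc, hcc, one_mul]
  -- inverse of L₁
  letI : Invertible L₁ := L₁.invertibleOfIsUnitDet hdetL1
  have hL1inv_lower : ∀ x y : Fin n, x < y → L₁⁻¹ x y = 0 := by
    have hbt : L₁.BlockTriangular OrderDual.toDual := fun i j hij => hL1_lower i j hij
    have hbt' := Matrix.blockTriangular_inv_of_blockTriangular hbt
    intro x y hxy
    exact hbt' hxy
  have hL1inv_diag : ∀ x : Fin n, L₁⁻¹ x x = 1 := by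
    intro x
    have hinvmul : L₁⁻¹ * L₁ = 1 := Matrix.nonsing_inv_mul _ hdetL1
    have e4 := congrFun (congrFun hinvmul x) x
    rw [mul_diag_lower _ _ hL1inv_lower hL1_lower, hL1_diag, mul_one,
      Matrix.one_apply_eq] at e4
    exact e4
  have hmain : L₁⁻¹ * b = T * u2 := by
    rw [hb2]; exact Matrix.nonsing_inv_mul_cancel_left _ _ hdetL1
  have key : ∀ x : Fin n, b x x = u x.rev x.rev * d x.rev := by
    intro x
    have e5 := congrFun (congrFun hmain x) x
    rw [mul_diag_lower _ _ hL1inv_lower hbl, hL1inv_diag, one_mul,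
      mul_diag_upper _ _ hT_upper (fun p q hpq => hu2.2 p q hpq), hu2.1, mul_one,
      hT_diag] at e5
    exact e5
  intro j
  have e6 := key j.rev
  rw [Fin.rev_rev] at e6
  rw [e6, mul_comm]
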